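/- With (s_k) i.i.d. uniform on {−1,+1}, and I(n,d) the indicator that d ∈ L_s(n) := ⋃_{k≤n} D^{(s_k)}(k) (where D⁻(k) = divisors of k, D⁺(k) = divisors of 2k not dividing k): if d₁, d₂ are positive integers with ν₂(d₁) = ν₂(d₂), then E[I(n,d₁)I(n,d₂)] = 1 − 2^{−⌊n(2,d₁)/d₁⌋} − 2^{−⌊n(2,d₂)/d₂⌋} + 2^{−⌊n(2,d₁)/d₁⌋ − ⌊n(2,d₂)/d₂⌋ + ⌊n(2,[d₁,d₂])/[d₁,d₂]⌋}, where (2,d) = gcd(2,d) and [d₁,d₂] = lcm(d₁,d₂). -/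

import Mathlib

open MeasureTheory ProbabilityTheory

/-- `d ∈ L_s(n)(ω)`: there is `k ≤ n` with `d ∈ D^{(s_k)}(k)`, where
`D⁻(k)` is the set of divisors of `k` and `D⁺(k)` is the set of divisors
of `2k` not dividing `k`. -/
def memL {Ω : Type*} (s : ℕ → Ω → ℤ) (n d : ℕ) (ω : Ω) : Prop :=
  ∃ k ∈ Finset.Icc 1 n,
    if s k ω = -1 then d ∣ k else (d ∣ 2 * k ∧ ¬ d ∣ k)

/-- `d / gcd 2 d` : the "half-period". -/
def mhalf (d : ℕ) : ℕ := d / Nat.gcd 2 d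

def Fset (n d : ℕ) : Finset ℕ := (Finset.Icc 1 n).filter (fun k => mhalf d ∣ k)

def sgn (d k : ℕ) : ℤ := if d ∣ k then 1 else -1

def sgn' (d₁ d₂ k : ℕ) : ℤ := if mhalf d₁ ∣ k then sgn d₁ k else sgn d₂ k

lemma mhalf_even {e : ℕ} : mhalf (2 * e) = e := by
  unfold mhalf
  rw [Nat.gcd_eq_left (dvd_mul_right 2 e), Nat.mul_div_cancel_left _ two_pos]

lemma gcd_two_odd {d : ℕ} (h : ¬ 2 ∣ d) : Nat.gcd 2 d = 1 := by
  rcases (Nat.dvd_prime Nat.prime_two).mp (Nat.gcd_dvd_left 2 d) with h1 | h2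
  · exact h1
  · exact absurd (h2 ▸ Nat.gcd_dvd_right 2 d) h

lemma mhalf_odd {d : ℕ} (h : ¬ 2 ∣ d) : mhalf d = d := by
  unfold mhalf; rw [gcd_two_odd h, Nat.div_one]

lemma dvd_two_mul_iff {d k : ℕ} : d ∣ 2 * k ↔ mhalf d ∣ k := by
  by_cases h : 2 ∣ d
  · obtain ⟨e, rfl⟩ := h
    rw [mhalf_even, mul_dvd_mul_iff_left (two_ne_zero)]
  · rw [mhalf_odd h]
    constructor
    · intro hd
      exact (Nat.coprime_two_left.mpr (Nat.odd_iff.mpr (Nat.two_dvd_ne_zero.mp h))).symm.dvd_of_dvd_mul_left hd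
    · exact fun hd => hd.mul_left 2

/-- Characterization of the complement of `memL`. -/
lemma not_memL_iff {Ω : Type*} (s : ℕ → Ω → ℤ) (hrange : ∀ k ω, s k ω = -1 ∨ s k ω = 1)
    (n d : ℕ) (ω : Ω) :
    ¬ memL s n d ω ↔ ∀ k ∈ Fset n d, s k ω = sgn d k := by
  unfold memL Fset sgn
  rw [not_exists]
  constructor
  · intro h k hk
    rw [Finset.mem_filter] at hk
    obtain ⟨hk1, hk2⟩ := hk
    have h2k : d ∣ 2 * k := dvd_two_mul_iff.mpr hk2
    rcases hrange k ω with hs | hs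
    · rw [hs]
      have : ¬ d ∣ k := by
        intro hdk
        exact (h k) ⟨hk1, by rw [hs]; simp [hdk]⟩
      simp [this]
    · rw [hs]
      have hdk : d ∣ k := by
        by_contra hdk
        exact (h k) ⟨hk1, by rw [hs]; norm_num; exact ⟨h2k, hdk⟩⟩
      simp [hdk]
  · intro h k
    rintro ⟨hk1, hk2⟩
    by_cases h2k : d ∣ 2 * k
    · have hkF : k ∈ (Finset.Icc 1 n).filter (fun k => mhalf d ∣ k) :=
        Finset.mem_filter.mpr ⟨hk1, dvd_two_mul_iff.mp h2k⟩
      have hs := h k hkF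
      by_cases hdk : d ∣ k
      · rw [if_pos hdk] at hs
        rw [hs] at hk2
        norm_num at hk2
        exact hk2.2 hdk
      · rw [if_neg hdk] at hs
        rw [hs] at hk2
        simp at hk2
        exact hdk hk2
    · have hdk : ¬ d ∣ k := fun hh => h2k (hh.mul_left 2)
      rcases hrange k ω with hs | hs <;> rw [hs] at hk2 <;> simp at hk2
      · exact hdk hk2
      · exact h2k hk2.1

lemma card_Fset (n d : ℕ) : (Fset n d).card = n * Nat.gcd 2 d / d := by
  unfold Fset
  rw [show Finset.Icc 1 n = Finset.Ioc 0 n from rfl, Nat.Ioc_filter_dvd_card_eq_div]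
  rw [mhalf]
  have hg : 0 < Nat.gcd 2 d := Nat.gcd_pos_of_pos_left _ two_pos
  obtain ⟨m, hm⟩ := Nat.gcd_dvd_right 2 d
  set g := Nat.gcd 2 d with hgdef
  rw [hm, Nat.mul_div_cancel_left _ hg, mul_comm g m, Nat.mul_div_mul_right _ _ hg]

lemma mhalf_lcm {d₁ d₂ : ℕ} (h : 2 ∣ d₁ ↔ 2 ∣ d₂) :
    Nat.lcm (mhalf d₁) (mhalf d₂) = mhalf (Nat.lcm d₁ d₂) := by
  by_cases h1 : 2 ∣ d₁
  · have h2 := h.mp h1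
    obtain ⟨e₁, rfl⟩ := h1
    obtain ⟨e₂, rfl⟩ := h2
    rw [mhalf_even, mhalf_even, Nat.lcm_mul_left, mhalf_even]
  · have h2 : ¬ 2 ∣ d₂ := fun hh => h1 (h.mpr hh)
    have hl : ¬ 2 ∣ Nat.lcm d₁ d₂ := by
      intro hh
      rcases (Nat.Prime.dvd_mul Nat.prime_two).mp (hh.trans (Nat.lcm_dvd_mul d₁ d₂)) with
        hc | hc
      · exact h1 hc
      · exact h2 hc
    rw [mhalf_odd h1, mhalf_odd h2, mhalf_odd hl]

/-- In the even case, divisibility by `d` given divisibility by `mhalf d`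
is governed by the 2-adic valuation. -/
lemma dvd_iff_val {d k : ℕ} (h2 : 2 ∣ d) (hd : d ≠ 0) (hk : k ≠ 0)
    (hmk : mhalf d ∣ k) : d ∣ k ↔ padicValNat 2 d ≤ padicValNat 2 k := by
  constructor
  · intro hdk
    exact (padicValNat_dvd_iff_le hk).mp ((pow_padicValNat_dvd).trans hdk)
  · intro hle
    obtain ⟨e, rfl⟩ := h2
    rw [mhalf_even] at hmk
    obtain ⟨t, rfl⟩ := hmk
    have he : e ≠ 0 := by rintro rfl; simp at hd
    have ht : t ≠ 0 := by rintro rfl; simp at hk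
    rw [padicValNat.mul (by norm_num) he, padicValNat.mul he ht,
      padicValNat.self one_lt_two] at hle
    have h2t : 2 ∣ t := by
      have : 1 ≤ padicValNat 2 t := by omega
      simpa using (padicValNat_dvd_iff_le ht).mpr this
    obtain ⟨u, rfl⟩ := h2t
    exact ⟨u, by ring⟩

/-- Sign consistency on the intersection. -/
lemma sgn_eq {d₁ d₂ k : ℕ} (hd₁ : d₁ ≠ 0) (hd₂ : d₂ ≠ 0) (hk : k ≠ 0)
    (hval : padicValNat 2 d₁ = padicValNat 2 d₂)
    (h1 : mhalf d₁ ∣ k) (h2 : mhalf d₂ ∣ k) : sgn d₁ k = sgn d₂ k := by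
  have hpar : 2 ∣ d₁ ↔ 2 ∣ d₂ := by
    rw [dvd_iff_padicValNat_ne_zero hd₁, dvd_iff_padicValNat_ne_zero hd₂, hval]
  by_cases he : 2 ∣ d₁
  · have he2 := hpar.mp he
    have e1 : d₁ ∣ k ↔ d₂ ∣ k := by
      rw [dvd_iff_val he hd₁ hk h1, dvd_iff_val he2 hd₂ hk h2, hval]
    unfold sgn
    by_cases hdk : d₁ ∣ k
    · rw [if_pos hdk, if_pos (e1.mp hdk)]
    · rw [if_neg hdk, if_neg (fun hh => hdk (e1.mpr hh))]
  · have he2 : ¬ 2 ∣ d₂ := fun hh => he (hpar.mpr hh)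
    rw [mhalf_odd he] at h1
    rw [mhalf_odd he2] at h2
    unfold sgn
    rw [if_pos h1, if_pos h2]

/-- The probability that finitely many fixed signs all occur. -/
lemma prob_forced {Ω : Type*} [MeasurableSpace Ω] (μ : Measure Ω)
    [IsProbabilityMeasure μ] (s : ℕ → Ω → ℤ)
    (hmeas : ∀ k, Measurable (s k))
    (hrange : ∀ k ω, s k ω = -1 ∨ s k ω = 1)
    (hindep : iIndepFun s μ)
    (hunif : ∀ k, μ {ω | s k ω = 1} = 1 / 2)
    (F : Finset ℕ) (σ : ℕ → ℤ) (hσ : ∀ k ∈ F, σ k = 1 ∨ σ k = -1) :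
    μ {ω | ∀ k ∈ F, s k ω = σ k} = (1 / 2 : ENNReal) ^ F.card := by
  have hset : {ω | ∀ k ∈ F, s k ω = σ k} = ⋂ k ∈ F, (s k) ⁻¹' {σ k} := by
    ext ω; simp [Set.mem_iInter]
  have hprod := hindep.meas_biInter (S := F) (s := fun k => (s k) ⁻¹' {σ k})
    (fun i _ => ⟨{σ i}, measurableSet_singleton _, rfl⟩)
  rw [hset, hprod]
  have hval : ∀ k ∈ F, μ ((s k) ⁻¹' {σ k}) = 1 / 2 := by
    intro k hk
    rcases hσ k hk with hσ1 | hσ1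
    · rw [hσ1]; exact hunif k
    · rw [hσ1]
      have hcompl : (s k) ⁻¹' {(-1 : ℤ)} = ((s k) ⁻¹' {(1 : ℤ)})ᶜ := by
        ext ω
        rcases hrange k ω with h | h <;> simp [h]
      rw [hcompl, measure_compl (hmeas k (measurableSet_singleton _)) (measure_ne_top _ _),
        measure_univ]
      have : μ ((s k) ⁻¹' {(1 : ℤ)}) = 1 / 2 := hunif k
      rw [this]
      rw [ENNReal.sub_eq_of_eq_add (by simp)]
      rw [ENNReal.add_halves]
  rw [Finset.prod_congr rfl hval, Finset.prod_const]

theorem stmt_12 {Ω : Type*} [MeasurableSpace Ω] (μ : Measure Ω)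
    [IsProbabilityMeasure μ] (s : ℕ → Ω → ℤ)
    (hmeas : ∀ k, Measurable (s k))
    (hrange : ∀ k ω, s k ω = -1 ∨ s k ω = 1)
    (hindep : iIndepFun s μ)
    (hunif : ∀ k, μ {ω | s k ω = 1} = 1 / 2)
    (n d₁ d₂ : ℕ) (hn : 1 ≤ n) (hd₁ : 1 ≤ d₁) (hd₂ : 1 ≤ d₂)
    (hval : padicValNat 2 d₁ = padicValNat 2 d₂) :
    (μ {ω | memL s n d₁ ω ∧ memL s n d₂ ω}).toReal =
      1 - (1 / 2 : ℝ) ^ (n * Nat.gcd 2 d₁ / d₁)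
        - (1 / 2 : ℝ) ^ (n * Nat.gcd 2 d₂ / d₂)
        + (1 / 2 : ℝ) ^ (n * Nat.gcd 2 d₁ / d₁ + n * Nat.gcd 2 d₂ / d₂
            - n * Nat.gcd 2 (Nat.lcm d₁ d₂) / Nat.lcm d₁ d₂) := by
  classical
  set c₁ := n * Nat.gcd 2 d₁ / d₁ with hc₁
  set c₂ := n * Nat.gcd 2 d₂ / d₂ with hc₂
  set c₃ := n * Nat.gcd 2 (Nat.lcm d₁ d₂) / Nat.lcm d₁ d₂ with hc₃
  have hd₁0 : d₁ ≠ 0 := by omega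
  have hd₂0 : d₂ ≠ 0 := by omega
  have hpar : 2 ∣ d₁ ↔ 2 ∣ d₂ := by
    rw [dvd_iff_padicValNat_ne_zero hd₁0, dvd_iff_padicValNat_ne_zero hd₂0, hval]
  -- the "failure" events
  set E₁ : Set Ω := {ω | ∀ k ∈ Fset n d₁, s k ω = sgn d₁ k} with hE₁
  set E₂ : Set Ω := {ω | ∀ k ∈ Fset n d₂, s k ω = sgn d₂ k} with hE₂
  have hE₁eq : E₁ = ⋂ k ∈ Fset n d₁, (s k) ⁻¹' {sgn d₁ k} := by ext ω; simp [hE₁]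
  have hE₂eq : E₂ = ⋂ k ∈ Fset n d₂, (s k) ⁻¹' {sgn d₂ k} := by ext ω; simp [hE₂]
  have hE₁m : MeasurableSet E₁ := by
    rw [hE₁eq]
    exact MeasurableSet.biInter (Fset n d₁).countable_toSet
      (fun k _ => hmeas k (measurableSet_singleton _))
  have hE₂m : MeasurableSet E₂ := by
    rw [hE₂eq]
    exact MeasurableSet.biInter (Fset n d₂).countable_toSet
      (fun k _ => hmeas k (measurableSet_singleton _))
  -- complement characterization
  have hcompl : {ω | memL s n d₁ ω ∧ memL s n d₂ ω} = (E₁ ∪ E₂)ᶜ := by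
    ext ω
    simp only [Set.mem_setOf_eq, Set.mem_compl_iff, Set.mem_union, hE₁, hE₂]
    rw [← not_memL_iff s hrange n d₁ ω, ← not_memL_iff s hrange n d₂ ω]
    tauto
  -- probabilities of failure events
  have hσ₁ : ∀ k ∈ Fset n d₁, sgn d₁ k = 1 ∨ sgn d₁ k = -1 := by
    intro k _; unfold sgn; split <;> simp
  have hσ₂ : ∀ k ∈ Fset n d₂, sgn d₂ k = 1 ∨ sgn d₂ k = -1 := by
    intro k _; unfold sgn; split <;> simp
  have hμE₁ : μ E₁ = (1 / 2 : ENNReal) ^ c₁ := by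
    rw [hE₁, prob_forced μ s hmeas hrange hindep hunif _ _ hσ₁, card_Fset]
  have hμE₂ : μ E₂ = (1 / 2 : ENNReal) ^ c₂ := by
    rw [hE₂, prob_forced μ s hmeas hrange hindep hunif _ _ hσ₂, card_Fset]
  -- intersection of the two failure events
  have hFinter : Fset n d₁ ∩ Fset n d₂ = Fset n (Nat.lcm d₁ d₂) := by
    unfold Fset
    rw [← Finset.filter_and]
    apply Finset.filter_congr
    intro k _
    simp only [← Nat.lcm_dvd_iff, mhalf_lcm hpar]
  have hsgn : ∀ k ∈ Fset n d₁ ∩ Fset n d₂, sgn d₁ k = sgn d₂ k := by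
    intro k hk
    rw [Finset.mem_inter] at hk
    obtain ⟨hk1, hk2⟩ := hk
    rw [Fset, Finset.mem_filter] at hk1 hk2
    have hk0 : k ≠ 0 := by
      have := (Finset.mem_Icc.mp hk1.1).1; omega
    exact sgn_eq hd₁0 hd₂0 hk0 hval hk1.2 hk2.2
  have hEinter : E₁ ∩ E₂ = {ω | ∀ k ∈ Fset n d₁ ∪ Fset n d₂, s k ω = sgn' d₁ d₂ k} := by
    ext ω
    simp only [Set.mem_inter_iff, hE₁, hE₂, Set.mem_setOf_eq]
    constructor
    · rintro ⟨h1, h2⟩ k hk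
      rw [Finset.mem_union] at hk
      rcases hk with hk | hk
      · have : mhalf d₁ ∣ k := (Finset.mem_filter.mp hk).2
        rw [sgn', if_pos this]
        exact h1 k hk
      · by_cases hm : mhalf d₁ ∣ k
        · have hkin : k ∈ Fset n d₁ ∩ Fset n d₂ := by
            rw [Finset.mem_inter]
            exact ⟨Finset.mem_filter.mpr ⟨(Finset.mem_filter.mp hk).1, hm⟩, hk⟩
          rw [sgn', if_pos hm, hsgn k hkin]
          exact h2 k hk
        · rw [sgn', if_neg hm]
          exact h2 k hk
    · intro h
      constructor
      · intro k hk
        have := h k (Finset.mem_union_left _ hk)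
        rwa [sgn', if_pos (Finset.mem_filter.mp hk).2] at this
      · intro k hk
        have := h k (Finset.mem_union_right _ hk)
        by_cases hm : mhalf d₁ ∣ k
        · rw [sgn', if_pos hm] at this
          have hkin : k ∈ Fset n d₁ ∩ Fset n d₂ := by
            rw [Finset.mem_inter]
            exact ⟨Finset.mem_filter.mpr ⟨(Finset.mem_filter.mp hk).1, hm⟩, hk⟩
          rwa [hsgn k hkin] at this
        · rwa [sgn', if_neg hm] at this
  have hσ'range : ∀ k ∈ Fset n d₁ ∪ Fset n d₂, sgn' d₁ d₂ k = 1 ∨ sgn' d₁ d₂ k = -1 := by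
    intro k _; unfold sgn' sgn; split <;> (split <;> simp)
  have hcard : (Fset n d₁ ∪ Fset n d₂).card = c₁ + c₂ - c₃ := by
    have h1 := Finset.card_union_add_card_inter (Fset n d₁) (Fset n d₂)
    rw [hFinter, card_Fset, card_Fset, card_Fset] at h1
    omega
  have hμE₃ : μ (E₁ ∩ E₂) = (1 / 2 : ENNReal) ^ (c₁ + c₂ - c₃) := by
    rw [hEinter, prob_forced μ s hmeas hrange hindep hunif _ _ hσ'range, hcard]
  -- inclusion-exclusion
  have hkey := measure_union_add_inter (μ := μ) E₁ hE₂m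
  rw [hμE₁, hμE₂, hμE₃] at hkey
  have htop : ∀ c : ℕ, ((1 / 2 : ENNReal) ^ c) ≠ ⊤ := fun c =>
    ENNReal.pow_ne_top (by norm_num)
  have hUle : μ (E₁ ∪ E₂) ≤ 1 := prob_le_one
  have htoReal : ∀ c : ℕ, ((1 / 2 : ENNReal) ^ c).toReal = (1 / 2 : ℝ) ^ c := by
    intro c
    rw [ENNReal.toReal_pow]
    norm_num
  have hkeyR : (μ (E₁ ∪ E₂)).toReal + (1 / 2 : ℝ) ^ (c₁ + c₂ - c₃)
      = (1 / 2 : ℝ) ^ c₁ + (1 / 2 : ℝ) ^ c₂ := by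
    have := congrArg ENNReal.toReal hkey
    rwa [ENNReal.toReal_add (measure_ne_top _ _) (htop _),
      ENNReal.toReal_add (htop _) (htop _), htoReal, htoReal, htoReal] at this
  rw [hcompl, measure_compl (hE₁m.union hE₂m) (measure_ne_top _ _), measure_univ,
    ENNReal.toReal_sub_of_le hUle ENNReal.one_ne_top, ENNReal.toReal_one]
  linarith
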